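/- For every m ≥ 1, the set of points x of the torus (ℝ/ℤ)^m such that the cyclic subgroup {n • x : n ∈ ℤ} is dense in (ℝ/ℤ)^m is itself a dense subset of (ℝ/ℤ)^m. -/

import Mathlib

open TopologicalSpace Set

/-- For a nonempty open set `U` in the torus, the set of `x` having some integer multiple in
`U` is dense. -/
lemma torus_dense_preimages (m : ℕ) (U : Set (Fin m → AddCircle (1 : ℝ)))
    (hU : IsOpen U) (hne : U.Nonempty) :
    Dense (⋃ n : ℤ, (fun x : Fin m → AddCircle (1 : ℝ) => n • x) ⁻¹' U) := by
  rw [dense_iff_inter_open]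
  intro V hV hVne
  obtain ⟨u, hu⟩ := hne
  obtain ⟨v, hv⟩ := hVne
  -- lift u and v to ℝ^m
  set u' : Fin m → ℝ := fun i => (u i).out
  have hu' : ∀ i, ((u' i : ℝ) : AddCircle (1 : ℝ)) = u i := fun i => Quotient.out_eq' (u i)
  set v' : Fin m → ℝ := fun i => (v i).out
  have hv' : ∀ i, ((v' i : ℝ) : AddCircle (1 : ℝ)) = v i := fun i => Quotient.out_eq' (v i)
  -- the quotient map
  set π : (Fin m → ℝ) → (Fin m → AddCircle (1 : ℝ)) := fun r i => (r i : AddCircle (1 : ℝ))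
    with hπ
  have hπc : Continuous π :=
    continuous_pi fun i => (AddCircle.continuous_mk' 1).comp (continuous_apply i)
  have hvV : v' ∈ π ⁻¹' V := by
    show π v' ∈ V
    have : π v' = v := funext fun i => hv' i
    rwa [this]
  obtain ⟨ε, hε, hball⟩ := Metric.isOpen_iff.1 (hV.preimage hπc) v' hvV
  obtain ⟨N, hN⟩ := exists_nat_one_div_lt hε
  set n : ℕ := N + 1
  have hn : (0 : ℝ) < n := by positivity
  have h1n : 1 / (n : ℝ) < ε := by simpa [n] using hN
  -- choose integer shifts
  set k : Fin m → ℤ := fun i => ⌈(n : ℝ) * v' i - u' i⌉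
  set t : Fin m → ℝ := fun i => (u' i + k i) / n
  have hdist : ∀ i, t i - v' i ∈ Set.Ico (0 : ℝ) (1 / n) := by
    intro i
    have h1 : (n : ℝ) * v' i - u' i ≤ (k i : ℝ) := Int.le_ceil _
    have h2 : (k i : ℝ) < (n : ℝ) * v' i - u' i + 1 := Int.ceil_lt_add_one _
    constructor
    · have : (n : ℝ) * v' i ≤ u' i + k i := by linarith
      rw [sub_nonneg, le_div_iff₀ hn]
      linarith
    · rw [sub_lt_iff_lt_add, div_add' _ _ _ (ne_of_gt hn), div_lt_div_iff₀ hn hn]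
      have : u' i + k i < n * v' i + 1 := by linarith
      nlinarith
  have htV : π t ∈ V := by
    apply hball
    rw [Metric.mem_ball, dist_pi_lt_iff hε]
    intro i
    rw [Real.dist_eq]
    have := hdist i
    rw [Set.mem_Ico] at this
    rw [abs_lt]
    constructor <;> [linarith; linarith [h1n]]
  have hnt : (n : ℤ) • π t = u := by
    funext i
    show (n : ℤ) • ((t i : ℝ) : AddCircle (1 : ℝ)) = u i
    have ht : (n : ℤ) • t i = u' i + (k i : ℤ) • (1 : ℝ) := by
      rw [zsmul_eq_mul, zsmul_eq_mul]
      push_cast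
      simp only [t]
      field_simp [hn.ne']
    rw [← AddCircle.coe_zsmul]
    rw [ht]
    rw [AddCircle.coe_add]
    have hz : (((k i : ℤ) • (1 : ℝ) : ℝ) : AddCircle (1 : ℝ)) = 0 :=
      (AddCircle.coe_eq_zero_iff 1).2 ⟨k i, rfl⟩
    rw [hz, add_zero, hu']
  refine ⟨π t, htV, ?_⟩
  exact Set.mem_iUnion.2 ⟨(n : ℤ), by simpa [Set.mem_preimage] using hnt ▸ hu⟩

/-- For `m ≥ 1`, the set of points of the torus `(ℝ/ℤ)^m` generating a
dense cyclic subgroup is dense in the torus. -/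
theorem dense_generators_of_torus (m : ℕ) (hm : 1 ≤ m) :
    Dense {x : Fin m → AddCircle (1 : ℝ) |
      Dense ((AddSubgroup.zmultiples x : AddSubgroup (Fin m → AddCircle (1 : ℝ))) :
        Set (Fin m → AddCircle (1 : ℝ)))} := by
  obtain ⟨B, hBc, hBne, hB⟩ :=
    exists_countable_basis (Fin m → AddCircle (1 : ℝ))
  have key : Dense (⋂ U ∈ B, ⋃ n : ℤ, (fun x : Fin m → AddCircle (1 : ℝ) => n • x) ⁻¹' U) := by
    apply dense_biInter_of_isOpen (S := B)
      (f := fun U => ⋃ n : ℤ, (fun x : Fin m → AddCircle (1 : ℝ) => n • x) ⁻¹' U)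
    · intro U hU
      exact isOpen_iUnion fun n => (hB.isOpen hU).preimage (continuous_zsmul n)
    · exact hBc
    · intro U hU
      refine torus_dense_preimages m U (hB.isOpen hU) ?_
      rcases Set.eq_empty_or_nonempty U with h | h
      · exact absurd (h ▸ hU) hBne
      · exact h
  refine key.mono fun x hx => ?_
  rw [Set.mem_setOf_eq, hB.dense_iff]
  intro o ho hone
  rw [Set.mem_iInter₂] at hx
  obtain ⟨n, hn⟩ := Set.mem_iUnion.1 (hx o ho)
  exact ⟨n • x, hn, AddSubgroup.zsmul_mem_zmultiples x n⟩
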